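/- Let μ, ν be finite Borel measures on ℝⁿ and d ≥ 1 an integer. If Δ(μ,ν) ≤ 1 then η_d(μ,ν) ≤ Δ(μ,ν)^{1/(d+1)}, and if Δ(μ,ν) ≥ 1 then η_d(μ,ν) ≤ Δ(μ,ν)^{1/d}. In particular, if a sequence (μ_i) of finite Borel measures satisfies Δ(μ_i, μ) → 0, then η_d(μ_i, μ) → 0. -/

import Mathlib

open MeasureTheory Filter Metric

noncomputable section

/-- Localized bounded Lipschitz (flat) distance
`Δ_U(μ,ν) = sup { ∫φ dμ − ∫φ dν : φ 1-Lipschitz, |φ| ≤ 1, φ = 0 outside U }`. -/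
def flatDistIn {X : Type*} [MeasurableSpace X] [PseudoMetricSpace X]
    (U : Set X) (μ ν : Measure X) : ℝ :=
  sSup {r | ∃ φ : X → ℝ, LipschitzWith 1 φ ∧ (∀ x, |φ x| ≤ 1) ∧ (∀ x ∉ U, φ x = 0) ∧
    r = (∫ x, φ x ∂μ) - ∫ x, φ x ∂ν}

/-- Bounded Lipschitz (flat) distance `Δ(μ,ν)`. -/
def flatDist {X : Type*} [MeasurableSpace X] [PseudoMetricSpace X]
    (μ ν : Measure X) : ℝ :=
  flatDistIn Set.univ μ ν

/-- Modified Prokhorov distance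
`η_d(μ,ν) = inf { δ > 0 : μ(B) ≤ ν(B^δ) + δ^d and ν(B) ≤ μ(B^δ) + δ^d for all closed balls B }`,
where `B^δ` is the open `δ`-neighbourhood (thickening) of `B`. -/
def etaDist {X : Type*} [MeasurableSpace X] [PseudoMetricSpace X]
    (d : ℕ) (μ ν : Measure X) : ℝ :=
  sInf {δ : ℝ | 0 < δ ∧ ∀ (x : X) (r : ℝ),
    μ (Metric.closedBall x r) ≤
        ν (Metric.thickening δ (Metric.closedBall x r)) + ENNReal.ofReal (δ ^ d) ∧
    ν (Metric.closedBall x r) ≤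
        μ (Metric.thickening δ (Metric.closedBall x r)) + ENNReal.ofReal (δ ^ d)}

variable {n : ℕ}

abbrev E (n : ℕ) := EuclideanSpace ℝ (Fin n)

lemma integ (μ : Measure (E n)) [IsFiniteMeasure μ] {φ : E n → ℝ} (hφ : Continuous φ)
    (hb : ∀ x, |φ x| ≤ 1) : Integrable φ μ := by
  refine ⟨hφ.aestronglyMeasurable, HasFiniteIntegral.of_bounded (C := 1) ?_⟩
  exact .of_forall fun x => by simpa using hb x

lemma bddAboveS (μ ν : Measure (E n)) [IsFiniteMeasure μ] [IsFiniteMeasure ν] :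
    BddAbove {r | ∃ φ : E n → ℝ, LipschitzWith 1 φ ∧ (∀ x, |φ x| ≤ 1) ∧
      (∀ x ∉ (Set.univ : Set (E n)), φ x = 0) ∧
      r = (∫ x, φ x ∂μ) - ∫ x, φ x ∂ν} := by
  refine ⟨(μ Set.univ).toReal + (ν Set.univ).toReal, fun r hr => ?_⟩
  obtain ⟨φ, hlip, hb, -, rfl⟩ := hr
  have h1 : ‖∫ x, φ x ∂μ‖ ≤ 1 * (μ Set.univ).toReal :=
    norm_integral_le_of_norm_le_const (.of_forall fun x => by
      rw [Real.norm_eq_abs]; exact hb x)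
  have h2 : ‖∫ x, φ x ∂ν‖ ≤ 1 * (ν Set.univ).toReal :=
    norm_integral_le_of_norm_le_const (.of_forall fun x => by
      rw [Real.norm_eq_abs]; exact hb x)
  rw [Real.norm_eq_abs, abs_le] at h1 h2
  linarith [h1.1, h1.2, h2.1, h2.2]

lemma flat_nonneg (μ ν : Measure (E n)) [IsFiniteMeasure μ] [IsFiniteMeasure ν] :
    0 ≤ flatDist μ ν := by
  refine le_csSup (bddAboveS μ ν) ?_
  exact ⟨0, by exact LipschitzWith.const' (0 : ℝ), by simp, by simp, by simp⟩

lemma flat_ub (μ ν : Measure (E n)) [IsFiniteMeasure μ] [IsFiniteMeasure ν]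
    {φ : E n → ℝ} (hlip : LipschitzWith 1 φ) (hb : ∀ x, |φ x| ≤ 1) :
    (∫ x, φ x ∂μ) - ∫ x, φ x ∂ν ≤ flatDist μ ν :=
  le_csSup (bddAboveS μ ν) ⟨φ, hlip, hb, fun x hx => absurd (Set.mem_univ x) hx, rfl⟩

lemma key (d : ℕ) (μ ν : Measure (E n)) [IsFiniteMeasure μ] [IsFiniteMeasure ν]
    {δ : ℝ} (hδ : 0 < δ)
    (h : ∀ φ : E n → ℝ, LipschitzWith 1 φ → (∀ x, |φ x| ≤ 1) →
      (∫ x, φ x ∂μ) - ∫ x, φ x ∂ν ≤ min δ 1 * δ ^ d)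
    (x : E n) (r : ℝ) :
    μ (closedBall x r) ≤ ν (thickening δ (closedBall x r)) + ENNReal.ofReal (δ ^ d) := by
  rcases lt_or_ge r 0 with hr | hr
  · simp [Metric.closedBall_eq_empty.2 hr]
  set B := closedBall x r with hB
  have hBne : B.Nonempty := ⟨x, mem_closedBall_self hr⟩
  set T := thickening δ B with hT
  set c : ℝ := min δ 1 with hc
  have hc0 : 0 < c := lt_min hδ one_pos
  set φ : E n → ℝ := fun y => max (c - infDist y B) 0 with hφ
  have hlip : LipschitzWith 1 φ := by
    have h1 : LipschitzWith 1 fun y : E n => c - infDist y B := by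
      refine LipschitzWith.of_dist_le_mul fun a b => ?_
      have := (lipschitz_infDist_pt B).dist_le_mul a b
      rw [Real.dist_eq] at this ⊢
      rw [show (c - infDist a B) - (c - infDist b B) = -(infDist a B - infDist b B) by ring,
        abs_neg]
      simpa using this
    simpa [hφ] using h1.max_const 0
  have hφ0 : ∀ y, 0 ≤ φ y := fun y => le_max_right _ _
  have hφc : ∀ y, φ y ≤ c := fun y => by
    apply max_le _ hc0.le
    have := infDist_nonneg (s := B) (x := y)
    linarith
  have hb : ∀ y, |φ y| ≤ 1 := fun y => by
    rw [abs_le]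
    constructor
    · linarith [hφ0 y]
    · exact le_trans (hφc y) (min_le_right _ _)
  have hφB : ∀ y ∈ B, φ y = c := fun y hy => by
    simp [hφ, infDist_zero_of_mem hy, hc0.le]
  have hφT : ∀ y, y ∉ T → φ y = 0 := fun y hy => by
    have : ¬ infDist y B < δ := fun hlt => hy ((mem_thickening_iff_infDist_lt hBne).2 hlt)
    push_neg at this
    have : c - infDist y B ≤ 0 := by
      have := min_le_left δ (1 : ℝ); simp only [hc]; linarith
    simp [hφ, max_eq_right this]
  have hcont : Continuous φ := hlip.continuous
  have hintμ := integ μ hcont hb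
  have hintν := integ ν hcont hb
  have hTmeas : MeasurableSet T := isOpen_thickening.measurableSet
  have hBmeas : MeasurableSet B := measurableSet_closedBall
  -- lower bound for ∫ φ dμ
  have step1 : c * (μ B).toReal ≤ ∫ y, φ y ∂μ := by
    have hind : Integrable (B.indicator fun _ => c) μ :=
      (integrable_const c).indicator hBmeas
    have hle : ∀ y, B.indicator (fun _ => c) y ≤ φ y := by
      intro y
      by_cases hy : y ∈ B
      · rw [Set.indicator_of_mem hy, hφB y hy]
      · rw [Set.indicator_of_notMem hy]; exact hφ0 y
    calc c * (μ B).toReal = ∫ y, B.indicator (fun _ => c) y ∂μ := by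
          rw [integral_indicator_const _ hBmeas]; ring_nf; rw [Measure.real]
      _ ≤ ∫ y, φ y ∂μ := integral_mono hind hintμ hle
  -- upper bound for ∫ φ dν
  have step2 : ∫ y, φ y ∂ν ≤ c * (ν T).toReal := by
    have hind : Integrable (T.indicator fun _ => c) ν :=
      (integrable_const c).indicator hTmeas
    have hle : ∀ y, φ y ≤ T.indicator (fun _ => c) y := by
      intro y
      by_cases hy : y ∈ T
      · rw [Set.indicator_of_mem hy]; exact hφc y
      · rw [Set.indicator_of_notMem hy, hφT y hy]
    calc ∫ y, φ y ∂ν ≤ ∫ y, T.indicator (fun _ => c) y ∂ν := integral_mono hintν hind hle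
      _ = c * (ν T).toReal := by
          rw [integral_indicator_const _ hTmeas]; rw [smul_eq_mul, Measure.real]; ring
  have hsub := h φ hlip hb
  have step3 : (μ B).toReal ≤ (ν T).toReal + δ ^ d := by
    have : c * (μ B).toReal ≤ c * ((ν T).toReal + δ ^ d) := by
      rw [mul_add]; linarith
    exact le_of_mul_le_mul_left this hc0
  calc μ B = ENNReal.ofReal (μ B).toReal := (ENNReal.ofReal_toReal (measure_ne_top μ B)).symm
    _ ≤ ENNReal.ofReal ((ν T).toReal + δ ^ d) := ENNReal.ofReal_le_ofReal step3
    _ = ENNReal.ofReal (ν T).toReal + ENNReal.ofReal (δ ^ d) := by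
        rw [ENNReal.ofReal_add ENNReal.toReal_nonneg (pow_nonneg hδ.le d)]
    _ = ν T + ENNReal.ofReal (δ ^ d) := by rw [ENNReal.ofReal_toReal (measure_ne_top ν T)]

lemma eta_nonneg (d : ℕ) (μ ν : Measure (E n)) : 0 ≤ etaDist d μ ν :=
  Real.sInf_nonneg fun _ hx => hx.1.le

lemma eta_le (d : ℕ) (μ ν : Measure (E n)) [IsFiniteMeasure μ] [IsFiniteMeasure ν]
    {δ : ℝ} (hδ : 0 < δ) (hΔ : flatDist μ ν ≤ min δ 1 * δ ^ d) :
    etaDist d μ ν ≤ δ := by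
  apply csInf_le ⟨0, fun y hy => hy.1.le⟩
  have hgen : ∀ φ : E n → ℝ, LipschitzWith 1 φ → (∀ x, |φ x| ≤ 1) →
      (∫ x, φ x ∂μ) - ∫ x, φ x ∂ν ≤ min δ 1 * δ ^ d ∧
      (∫ x, φ x ∂ν) - ∫ x, φ x ∂μ ≤ min δ 1 * δ ^ d := by
    intro φ hlip hb
    constructor
    · exact le_trans (flat_ub μ ν hlip hb) hΔ
    · have hneg : LipschitzWith 1 (fun y => -φ y) := hlip.neg
      have hbneg : ∀ y, |(-φ y : ℝ)| ≤ 1 := fun y => by simpa [abs_neg] using hb y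
      have := le_trans (flat_ub μ ν hneg hbneg) hΔ
      rw [integral_neg, integral_neg] at this
      linarith
  exact ⟨hδ, fun x r =>
    ⟨key d μ ν hδ (fun φ h1 h2 => (hgen φ h1 h2).1) x r,
     key d ν μ hδ (fun φ h1 h2 => (hgen φ h1 h2).2) x r⟩⟩

theorem stmt6 {n : ℕ} (d : ℕ) (hd : 1 ≤ d)
    (μ ν : Measure (EuclideanSpace ℝ (Fin n)))
    [IsFiniteMeasure μ] [IsFiniteMeasure ν] :
    ((flatDist μ ν ≤ 1 → etaDist d μ ν ≤ flatDist μ ν ^ ((1 : ℝ) / (d + 1))) ∧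
      (1 ≤ flatDist μ ν → etaDist d μ ν ≤ flatDist μ ν ^ ((1 : ℝ) / d))) ∧
    ∀ μi : ℕ → Measure (EuclideanSpace ℝ (Fin n)), (∀ i, IsFiniteMeasure (μi i)) →
      Tendsto (fun i => flatDist (μi i) μ) atTop (nhds 0) →
      Tendsto (fun i => etaDist d (μi i) μ) atTop (nhds 0) := by
  have hd1 : (0 : ℝ) < (d : ℝ) + 1 := by positivity
  have hdn : (0 : ℝ) < (d : ℝ) := by exact_mod_cast hd
  -- general claims
  have claim1 : ∀ (μ' ν' : Measure (E n)), ∀ _ : IsFiniteMeasure μ', ∀ _ : IsFiniteMeasure ν',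
      flatDist μ' ν' ≤ 1 → etaDist d μ' ν' ≤ flatDist μ' ν' ^ ((1 : ℝ) / (d + 1)) := by
    intro μ' ν' _ _ hle
    have hnn := flat_nonneg μ' ν'
    rcases eq_or_lt_of_le hnn with heq | hpos
    · rw [← heq, Real.zero_rpow (by positivity)]
      refine le_of_forall_pos_le_add fun ε hε => ?_
      have := eta_le d μ' ν' hε (by rw [← heq]; positivity)
      linarith
    · set Δ := flatDist μ' ν' with hΔ
      set δ : ℝ := Δ ^ ((1 : ℝ) / (d + 1)) with hδdef
      have hδpos : 0 < δ := Real.rpow_pos_of_pos hpos _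
      have hδ1 : δ ≤ 1 := Real.rpow_le_one hnn hle (by positivity)
      have hne : ((d : ℝ) + 1) ≠ 0 := by positivity
      have hkey : δ * δ ^ d = Δ := by
        calc δ * δ ^ d = δ ^ ((1 : ℝ) + d) := by
              rw [Real.rpow_one_add' hδpos.le (by positivity), Real.rpow_natCast]
          _ = Δ ^ (((1 : ℝ) / (d + 1)) * (1 + d)) := by
              rw [hδdef, ← Real.rpow_mul hnn]
          _ = Δ := by
              rw [show ((1 : ℝ) / (d + 1)) * (1 + d) = 1 by field_simp; ring, Real.rpow_one]
      refine eta_le d μ' ν' hδpos (le_of_eq ?_)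
      rw [min_eq_left hδ1, hkey]
  have claim2 : ∀ (μ' ν' : Measure (E n)), ∀ _ : IsFiniteMeasure μ', ∀ _ : IsFiniteMeasure ν',
      1 ≤ flatDist μ' ν' → etaDist d μ' ν' ≤ flatDist μ' ν' ^ ((1 : ℝ) / d) := by
    intro μ' ν' _ _ hge
    set Δ := flatDist μ' ν' with hΔ
    have hpos : (0 : ℝ) < Δ := lt_of_lt_of_le one_pos hge
    set δ : ℝ := Δ ^ ((1 : ℝ) / d) with hδdef
    have hδpos : 0 < δ := Real.rpow_pos_of_pos hpos _
    have hδ1 : 1 ≤ δ := Real.one_le_rpow hge (by positivity)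
    have hkey : δ ^ d = Δ := by
      rw [hδdef, ← Real.rpow_natCast (Δ ^ ((1:ℝ)/d)) d, ← Real.rpow_mul hpos.le,
        show ((1 : ℝ) / d) * d = 1 by field_simp, Real.rpow_one]
    refine eta_le d μ' ν' hδpos (le_of_eq ?_)
    rw [min_eq_right hδ1, one_mul, hkey]
  refine ⟨⟨claim1 μ ν ‹_› ‹_›, claim2 μ ν ‹_› ‹_›⟩, ?_⟩
  intro μi hfin htend
  have hnn : ∀ i, 0 ≤ flatDist (μi i) μ := fun i => by
    haveI := hfin i; exact flat_nonneg _ _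
  have hev : ∀ᶠ i in atTop, flatDist (μi i) μ ≤ 1 := by
    have := htend.eventually (eventually_le_nhds (by norm_num : (0:ℝ) < 1))
    exact this.mono fun i hi => hi
  have hsq : ∀ᶠ i in atTop, etaDist d (μi i) μ ≤ flatDist (μi i) μ ^ ((1 : ℝ) / (d + 1)) := by
    refine hev.mono fun i hi => ?_
    haveI := hfin i
    exact claim1 (μi i) μ ‹_› ‹_› hi
  have hcomp : Tendsto (fun i => flatDist (μi i) μ ^ ((1 : ℝ) / (d + 1))) atTop (nhds 0) := by
    have hcont : ContinuousAt (fun x : ℝ => x ^ ((1 : ℝ) / (d + 1))) 0 :=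
      Real.continuousAt_rpow_const 0 _ (Or.inr (by positivity))
    have h := hcont.tendsto.comp htend
    rw [Real.zero_rpow (by positivity : ((1:ℝ)/((d:ℝ)+1)) ≠ 0)] at h
    exact h
  exact squeeze_zero' (Eventually.of_forall fun i => eta_nonneg d _ _) hsq hcomp

end
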